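/- Let A₁, A₂ : ℝ² → ℝ be C¹ functions for which there exist constants C > 0 and ε > 0 such that |A₁(x)| ≤ C(1 + |x|)^{−1−ε} and |A₂(x)| ≤ C(1 + |x|)^{−1−ε} for all x ∈ ℝ², and suppose the curl F := ∂₁A₂ − ∂₂A₁ is Lebesgue integrable on ℝ². Then ∫_{ℝ²} F(x) dx = 0. -/

import Mathlib

open MeasureTheory

/-- Partial derivative in the `i`-th coordinate direction of `ℝ²`. -/
noncomputable def pd (i : Fin 2) (f : EuclideanSpace ℝ (Fin 2) → ℝ) :
    EuclideanSpace ℝ (Fin 2) → ℝ :=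
  fun x => fderiv ℝ f x (EuclideanSpace.single i 1)

open Set Filter Topology

/-- The canonical (measure-preserving) linear identification of `ℝ × ℝ` with `ℝ²`. -/
noncomputable def planeEquiv : (ℝ × ℝ) ≃L[ℝ] EuclideanSpace ℝ (Fin 2) :=
  (ContinuousLinearEquiv.finTwoArrow ℝ ℝ).symm.trans (EuclideanSpace.equiv (Fin 2) ℝ).symm

/-- The same identification as a measurable equivalence. -/
noncomputable def planeMEquiv : (ℝ × ℝ) ≃ᵐ EuclideanSpace ℝ (Fin 2) :=
  (MeasurableEquiv.finTwoArrow (α := ℝ)).symm.trans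
    (MeasurableEquiv.toLp 2 (Fin 2 → ℝ))

lemma planeEquiv_coe : ⇑planeEquiv = ⇑planeMEquiv := rfl

lemma planeEquiv_measurePreserving : MeasurePreserving (⇑planeEquiv) := by
  have h : ⇑planeEquiv = ((MeasurableEquiv.toLp 2 (Fin 2 → ℝ)) ∘
      (MeasurableEquiv.finTwoArrow (α := ℝ)).symm) := rfl
  rw [h]
  exact ((EuclideanSpace.volume_preserving_symm_measurableEquiv_toLp (Fin 2)).symm _).comp
    ((volume_preserving_finTwoArrow ℝ).symm _)

lemma planeEquiv_measurableEmbedding : MeasurableEmbedding (⇑planeEquiv) := by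
  rw [planeEquiv_coe]; exact planeMEquiv.measurableEmbedding

lemma planeEquiv_one_zero : planeEquiv (1, 0) = EuclideanSpace.single (0 : Fin 2) 1 := by
  ext i; fin_cases i <;> simp [planeEquiv, EuclideanSpace.single, EuclideanSpace.equiv]

lemma planeEquiv_zero_one : planeEquiv (0, 1) = EuclideanSpace.single (1 : Fin 2) 1 := by
  ext i; fin_cases i <;> simp [planeEquiv, EuclideanSpace.single, EuclideanSpace.equiv]

lemma abs_coord_le_norm (x : EuclideanSpace ℝ (Fin 2)) (i : Fin 2) : |x i| ≤ ‖x‖ := by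
  rw [EuclideanSpace.norm_eq]
  refine (Real.le_sqrt (abs_nonneg _) (by positivity)).mpr ?_
  have := Finset.single_le_sum (f := fun j => ‖x j‖ ^ 2)
    (fun j _ => sq_nonneg _) (Finset.mem_univ i)
  simpa [sq_abs] using this

lemma abs_fst_le_norm (p : ℝ × ℝ) : |p.1| ≤ ‖planeEquiv p‖ := by
  have h : planeEquiv p 0 = p.1 := rfl
  simpa [h] using abs_coord_le_norm (planeEquiv p) 0

lemma abs_snd_le_norm (p : ℝ × ℝ) : |p.2| ≤ ‖planeEquiv p‖ := by
  have h : planeEquiv p 1 = p.2 := rfl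
  simpa [h] using abs_coord_le_norm (planeEquiv p) 1

/-- If `A₁, A₂` are `C¹` on `ℝ²` with `|Aᵢ(x)| ≤ C (1 + |x|)^{-1-ε}` and the curl
`F = ∂₁A₂ - ∂₂A₁` is Lebesgue integrable, then the total flux `∫ F` vanishes. -/
theorem flux_of_decaying_potential_vanishes
    (A₁ A₂ : EuclideanSpace ℝ (Fin 2) → ℝ)
    (hA₁ : ContDiff ℝ 1 A₁) (hA₂ : ContDiff ℝ 1 A₂)
    (C ε : ℝ) (hC : 0 < C) (hε : 0 < ε)
    (hb₁ : ∀ x, |A₁ x| ≤ C * (1 + ‖x‖) ^ (-1 - ε : ℝ))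
    (hb₂ : ∀ x, |A₂ x| ≤ C * (1 + ‖x‖) ^ (-1 - ε : ℝ))
    (F : EuclideanSpace ℝ (Fin 2) → ℝ)
    (hF : F = fun x => pd 0 A₂ x - pd 1 A₁ x)
    (hInt : Integrable F) :
    ∫ x, F x = 0 := by
  have hmp : MeasurePreserving (⇑planeEquiv) := planeEquiv_measurePreserving
  have hemb : MeasurableEmbedding (⇑planeEquiv) := planeEquiv_measurableEmbedding
  have hcont : Continuous (⇑planeEquiv) := planeEquiv.continuous
  -- decay bound away from the origin
  have hbound : ∀ (A : EuclideanSpace ℝ (Fin 2) → ℝ),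
      (∀ x, |A x| ≤ C * (1 + ‖x‖) ^ (-1 - ε : ℝ)) →
      ∀ (R : ℝ), 0 ≤ R → ∀ x, R ≤ ‖x‖ → |A x| ≤ C * (1 + R) ^ (-1 - ε : ℝ) := by
    intro A hA R hR x hx
    refine (hA x).trans (mul_le_mul_of_nonneg_left ?_ hC.le)
    have h0 : (0:ℝ) < 1 + R := by linarith
    exact Real.rpow_le_rpow_of_nonpos h0 (by linarith) (by linarith)
  -- the transported data
  set f : ℝ × ℝ → ℝ := fun p => A₂ (planeEquiv p) with hf
  set g : ℝ × ℝ → ℝ := fun p => -A₁ (planeEquiv p) with hg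
  set f' : ℝ × ℝ → (ℝ × ℝ) →L[ℝ] ℝ :=
    fun p => (fderiv ℝ A₂ (planeEquiv p)).comp
      (planeEquiv : (ℝ × ℝ) →L[ℝ] EuclideanSpace ℝ (Fin 2)) with hf'
  set g' : ℝ × ℝ → (ℝ × ℝ) →L[ℝ] ℝ :=
    fun p => -((fderiv ℝ A₁ (planeEquiv p)).comp
      (planeEquiv : (ℝ × ℝ) →L[ℝ] EuclideanSpace ℝ (Fin 2))) with hg'
  have key : (fun p => f' p (1, 0) + g' p (0, 1)) = fun p => F (planeEquiv p) := by
    funext p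
    simp only [hf', hg', hF, ContinuousLinearMap.coe_comp', Function.comp_apply,
      ContinuousLinearMap.neg_apply, ContinuousLinearEquiv.coe_coe,
      planeEquiv_one_zero, planeEquiv_zero_one, pd]
    ring
  have hdf : ∀ p : ℝ × ℝ, HasFDerivAt f (f' p) p := fun p =>
    ((hA₂.differentiable one_ne_zero) (planeEquiv p)).hasFDerivAt.comp p planeEquiv.hasFDerivAt
  have hdg : ∀ p : ℝ × ℝ, HasFDerivAt g (g' p) p := fun p =>
    (((hA₁.differentiable one_ne_zero) (planeEquiv p)).hasFDerivAt.comp p planeEquiv.hasFDerivAt).neg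
  have hFψ : Integrable (fun p => F (planeEquiv p)) :=
    (hmp.integrable_comp_emb hemb).mpr hInt
  -- Green's theorem on the square `[-n, n]²`
  have green : ∀ n : ℕ,
      ∫ p in Icc ((-(n:ℝ), -(n:ℝ)) : ℝ × ℝ) (((n:ℝ), (n:ℝ)) : ℝ × ℝ), F (planeEquiv p) =
        (((∫ x in (-(n:ℝ))..(n:ℝ), g (x, (n:ℝ))) -
            ∫ x in (-(n:ℝ))..(n:ℝ), g (x, -(n:ℝ))) +
          ∫ y in (-(n:ℝ))..(n:ℝ), f ((n:ℝ), y)) -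
            ∫ y in (-(n:ℝ))..(n:ℝ), f (-(n:ℝ), y) := by
    intro n
    have hn0 : (0:ℝ) ≤ (n:ℝ) := Nat.cast_nonneg n
    have hle : ((-(n:ℝ), -(n:ℝ)) : ℝ × ℝ) ≤ (((n:ℝ), (n:ℝ)) : ℝ × ℝ) :=
      Prod.mk_le_mk.mpr ⟨neg_le_self hn0, neg_le_self hn0⟩
    have hInt' : IntegrableOn (fun p => f' p (1, 0) + g' p (0, 1))
        (Icc ((-(n:ℝ), -(n:ℝ)) : ℝ × ℝ) (((n:ℝ), (n:ℝ)) : ℝ × ℝ)) := by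
      rw [key]; exact hFψ.integrableOn
    have := integral_divergence_prod_Icc_of_hasFDerivAt_off_countable_of_le f g f' g'
      ((-(n:ℝ), -(n:ℝ)) : ℝ × ℝ) (((n:ℝ), (n:ℝ)) : ℝ × ℝ) hle ∅ countable_empty
      ((hA₂.continuous.comp hcont).continuousOn)
      ((hA₁.continuous.comp hcont).neg.continuousOn)
      (fun x _ => hdf x) (fun x _ => hdg x) hInt'
    rw [key] at this
    exact this
  -- bound for the boundary terms
  have edge : ∀ n : ℕ,
      ‖∫ p in Icc ((-(n:ℝ), -(n:ℝ)) : ℝ × ℝ) (((n:ℝ), (n:ℝ)) : ℝ × ℝ), F (planeEquiv p)‖ ≤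
        8 * C * (1 + (n:ℝ)) ^ (-ε : ℝ) := by
    intro n
    set R : ℝ := (n : ℝ) with hRdef
    have hR0 : (0:ℝ) ≤ R := Nat.cast_nonneg n
    have h1R : (0:ℝ) < 1 + R := by linarith
    set K : ℝ := C * (1 + R) ^ (-1 - ε : ℝ) with hK
    have hK0 : 0 ≤ K := by positivity
    have habs : |R - -R| = 2 * R := by rw [abs_of_nonneg (by linarith)]; ring
    have eg : ∀ t : ℝ, |t| = R → ‖∫ x in (-R)..R, g (x, t)‖ ≤ K * (2 * R) := by
      intro t ht
      rw [← habs]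
      refine intervalIntegral.norm_integral_le_of_norm_le_const fun x _ => ?_
      have h2 : R ≤ ‖planeEquiv (x, t)‖ := ht ▸ abs_snd_le_norm (x, t)
      simpa [hg, Real.norm_eq_abs] using hbound A₁ hb₁ R hR0 _ h2
    have ef : ∀ t : ℝ, |t| = R → ‖∫ y in (-R)..R, f (t, y)‖ ≤ K * (2 * R) := by
      intro t ht
      rw [← habs]
      refine intervalIntegral.norm_integral_le_of_norm_le_const fun y _ => ?_
      have h2 : R ≤ ‖planeEquiv (t, y)‖ := ht ▸ abs_fst_le_norm (t, y)
      simpa [hf, Real.norm_eq_abs] using hbound A₂ hb₂ R hR0 _ h2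
    have e1 := eg R (abs_of_nonneg hR0)
    have e2 := eg (-R) (by rw [abs_neg, abs_of_nonneg hR0])
    have e3 := ef R (abs_of_nonneg hR0)
    have e4 := ef (-R) (by rw [abs_neg, abs_of_nonneg hR0])
    rw [green n]
    set a := ∫ x in (-R)..R, g (x, R)
    set b := ∫ x in (-R)..R, g (x, -R)
    set c := ∫ y in (-R)..R, f (R, y)
    set d := ∫ y in (-R)..R, f (-R, y)
    have tri : ‖a - b + c - d‖ ≤ ‖a‖ + ‖b‖ + ‖c‖ + ‖d‖ := by
      calc ‖a - b + c - d‖ ≤ ‖a - b + c‖ + ‖d‖ := norm_sub_le _ _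
        _ ≤ ‖a - b‖ + ‖c‖ + ‖d‖ := by
            have := norm_add_le (a - b) c; linarith
        _ ≤ ‖a‖ + ‖b‖ + ‖c‖ + ‖d‖ := by
            have := norm_sub_le a b; linarith
    have hsum : ‖a - b + c - d‖ ≤ 8 * C * (R * (1 + R) ^ (-1 - ε : ℝ)) := by
      have : ‖a - b + c - d‖ ≤ 4 * (K * (2 * R)) := by linarith
      refine this.trans (le_of_eq ?_)
      rw [hK]; ring
    refine hsum.trans ?_
    have hstep : R * (1 + R) ^ (-1 - ε : ℝ) ≤ (1 + R) ^ (-ε : ℝ) := by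
      have h1 : R ≤ 1 + R := by linarith
      calc R * (1 + R) ^ (-1 - ε : ℝ) ≤ (1 + R) * (1 + R) ^ (-1 - ε : ℝ) :=
            mul_le_mul_of_nonneg_right h1 (Real.rpow_nonneg h1R.le _)
        _ = (1 + R) ^ (-ε : ℝ) := by
            rw [← Real.rpow_one_add' (by linarith) (by intro h; nlinarith [hε])]
            congr 1; ring
    calc 8 * C * (R * (1 + R) ^ (-1 - ε : ℝ)) ≤ 8 * C * ((1 + R) ^ (-ε : ℝ)) := by
          exact mul_le_mul_of_nonneg_left hstep (by positivity)
      _ = 8 * C * (1 + R) ^ (-ε : ℝ) := by ring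
  -- exhaust the plane by squares
  set S : ℕ → Set (EuclideanSpace ℝ (Fin 2)) :=
    fun n => planeEquiv '' Icc ((-(n:ℝ), -(n:ℝ)) : ℝ × ℝ) (((n:ℝ), (n:ℝ)) : ℝ × ℝ) with hS
  have hSm : ∀ n, MeasurableSet (S n) := fun n =>
    hemb.measurableSet_image.mpr measurableSet_Icc
  have hSmono : Monotone S := by
    intro m n hmn
    refine image_mono (Icc_subset_Icc ?_ ?_)
    · exact Prod.mk_le_mk.mpr ⟨neg_le_neg (Nat.cast_le.mpr hmn), neg_le_neg (Nat.cast_le.mpr hmn)⟩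
    · exact Prod.mk_le_mk.mpr ⟨Nat.cast_le.mpr hmn, Nat.cast_le.mpr hmn⟩
  have hSU : ⋃ n, S n = univ := by
    refine eq_univ_iff_forall.mpr fun x => mem_iUnion.mpr ?_
    obtain ⟨n, hn⟩ := exists_nat_ge (max |(planeEquiv.symm x).1| |(planeEquiv.symm x).2|)
    have h1 := abs_le.mp ((le_max_left _ _).trans hn)
    have h2 := abs_le.mp ((le_max_right _ _).trans hn)
    exact ⟨n, ⟨planeEquiv.symm x,
      ⟨Prod.mk_le_mk.mpr ⟨h1.1, h2.1⟩, Prod.mk_le_mk.mpr ⟨h1.2, h2.2⟩⟩,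
      planeEquiv.apply_symm_apply x⟩⟩
  have h1 : Tendsto (fun n => ∫ x in S n, F x) atTop (𝓝 (∫ x, F x)) := by
    have := tendsto_setIntegral_of_monotone hSm hSmono
      (by rw [hSU]; exact hInt.integrableOn)
    rwa [hSU, setIntegral_univ] at this
  have himg : ∀ n, ∫ x in S n, F x =
      ∫ p in Icc ((-(n:ℝ), -(n:ℝ)) : ℝ × ℝ) (((n:ℝ), (n:ℝ)) : ℝ × ℝ), F (planeEquiv p) :=
    fun n => hmp.setIntegral_image_emb hemb F _
  have hten0 : Tendsto (fun n : ℕ => 8 * C * (1 + (n:ℝ)) ^ (-ε : ℝ)) atTop (𝓝 0) := by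
    have ha : Tendsto (fun n : ℕ => 1 + (n:ℝ)) atTop atTop :=
      tendsto_atTop_add_const_left _ 1 tendsto_natCast_atTop_atTop
    have hb := (tendsto_rpow_neg_atTop hε).comp ha
    have := hb.const_mul (8 * C)
    simpa using this
  have h2 : Tendsto (fun n => ∫ x in S n, F x) atTop (𝓝 0) := by
    refine squeeze_zero_norm (fun n => ?_) hten0
    rw [himg n]
    exact edge n
  exact tendsto_nhds_unique h1 h2
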